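/- The matrix D satisfies D² = I₅ and DᵀJD = J (so D lies in the orthogonal group of the form J), and conjugation by D fixes both x and h: D x D⁻¹ = x and D h D⁻¹ = h. -/

import Mathlib

noncomputable section

/-- The symmetric bilinear form matrix `J = E₁₁ + E₂₄ + E₄₂ + E₃₅ + E₅₃`. -/
def J5 : Matrix (Fin 5) (Fin 5) ℂ :=
  !![1,0,0,0,0; 0,0,0,1,0; 0,0,0,0,1; 0,1,0,0,0; 0,0,1,0,0]

/-- The subregular nilpotent `x` with nonzero entries `x₁₄ = 1, x₂₁ = −1, x₂₃ = 1, x₅₄ = −1`. -/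
def x5 : Matrix (Fin 5) (Fin 5) ℂ :=
  !![0,0,0,1,0; -1,0,1,0,0; 0,0,0,0,0; 0,0,0,0,0; 0,0,0,-1,0]

/-- The semisimple element `h = diag(0, 2, 0, −2, 0)`. -/
def h5 : Matrix (Fin 5) (Fin 5) ℂ :=
  !![0,0,0,0,0; 0,2,0,0,0; 0,0,0,0,0; 0,0,0,-2,0; 0,0,0,0,0]

/-- The matrix `D` generating `C(x,h) = Z_G(x) ∩ Z_G(h) ≅ ℤ/2ℤ`. -/
def D5 : Matrix (Fin 5) (Fin 5) ℂ :=
  !![1,0,0,0,2; 0,-1,0,0,0; 2,0,-1,0,2; 0,0,0,-1,0; 0,0,0,0,-1]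

set_option maxHeartbeats 2000000 in
/-- `D` is an involution lying in the orthogonal group of the form `J`, and conjugation by `D`
fixes both `x` and `h`. -/
theorem D_involution_fixes_x_h :
    D5 * D5 = 1 ∧
    D5.transpose * J5 * D5 = J5 ∧
    D5 * x5 * D5⁻¹ = x5 ∧
    D5 * h5 * D5⁻¹ = h5 := by
  have hsq : D5 * D5 = 1 := by
    ext i j
    fin_cases i <;> fin_cases j <;>
      norm_num [D5, Matrix.mul_apply, Fin.sum_univ_five, Matrix.one_apply,
        Matrix.vecHead, Matrix.vecTail, Fin.ext_iff, Matrix.cons_val_two, Matrix.cons_val_three,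
        Matrix.cons_val_four]
  have hinv : D5⁻¹ = D5 := Matrix.inv_eq_left_inv hsq
  rw [hinv]
  refine ⟨hsq, ?_, ?_, ?_⟩ <;> ext i j <;> fin_cases i <;> fin_cases j <;>
    norm_num [D5, J5, x5, h5, Matrix.mul_apply, Matrix.transpose_apply,
      Fin.sum_univ_five, Matrix.vecHead, Matrix.vecTail, Matrix.cons_val_two, Matrix.cons_val_three,
      Matrix.cons_val_four]
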